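/- Let φ : ℝ → ℝ be a bounded, increasing, odd C² function with φ''(y) < 0 for y > 0. Then for every μ ≥ 0 and every centered Gaussian random variable z, E[φ(z+μ)·φ'(z+μ)] ≥ 0. -/

import Mathlib

open MeasureTheory ProbabilityTheory
open scoped ENNReal NNReal

theorem gaussian_phi_phi'_nonneg (φ : ℝ → ℝ)
    (hbdd : ∃ C, ∀ y, |φ y| ≤ C) (hmono : StrictMono φ)
    (hodd : ∀ y, φ (-y) = -φ y) (hC2 : ContDiff ℝ 2 φ)
    (hconc : ∀ y : ℝ, 0 < y → iteratedDeriv 2 φ y < 0)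
    (μ : ℝ) (hμ : 0 ≤ μ) (v : NNReal) :
    0 ≤ ∫ z, φ (z + μ) * deriv φ (z + μ) ∂(gaussianReal 0 v) := by
  classical
  have hdiff : Differentiable ℝ φ := hC2.differentiable (by norm_num)
  have hφ0 : φ 0 = 0 := by have := hodd 0; simp at this; linarith
  have hφnonneg : ∀ y : ℝ, 0 ≤ y → 0 ≤ φ y := by
    intro y hy
    have := hmono.monotone hy
    rwa [hφ0] at this
  have hderiv_nonneg : ∀ y : ℝ, 0 ≤ deriv φ y := by
    intro y
    have h := (hdiff y).hasDerivAt
    rw [hasDerivAt_iff_tendsto_slope] at h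
    refine ge_of_tendsto h ?_
    filter_upwards [self_mem_nhdsWithin] with x hx
    have hxy : x ≠ y := hx
    rw [slope_def_field]
    rcases lt_or_gt_of_ne hxy with h1 | h1
    · have e : (φ x - φ y) / (x - y) = (φ y - φ x) / (y - x) := by
        rw [div_eq_div_iff (sub_ne_zero.mpr hxy) (sub_ne_zero.mpr hxy.symm)]
        ring
      rw [e]
      exact div_nonneg (by have := hmono h1; linarith) (by linarith)
    · apply div_nonneg
      · have := hmono h1
        linarith
      · linarith
  have hderiv_even : ∀ y : ℝ, deriv φ (-y) = deriv φ y := by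
    intro y
    have h2 : (fun x : ℝ => -φ (-x)) = φ := funext fun x => by rw [hodd]; ring
    have h1 : deriv (fun x : ℝ => -φ (-x)) y = deriv φ (-y) := by
      rw [deriv.fun_neg, deriv_comp_neg, neg_neg]
    rw [h2] at h1
    exact h1.symm
  rcases eq_or_ne v 0 with hv | hv
  · subst hv
    rw [gaussianReal_zero_var, integral_dirac]
    simp only [zero_add]
    exact mul_nonneg (hφnonneg μ hμ) (hderiv_nonneg μ)
  · have hvpos : (0:ℝ) < (v:ℝ) := by
      exact NNReal.coe_pos.mpr (pos_iff_ne_zero.mpr hv)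
    rw [gaussianReal_of_var_ne_zero 0 hv]
    set p : ℝ → ℝ := gaussianPDFReal 0 v with hp
    have hpnonneg : ∀ x, 0 ≤ p x := gaussianPDFReal_nonneg 0 v
    have hwd : volume.withDensity (gaussianPDF 0 v)
        = volume.withDensity (fun x => ((p x).toNNReal : ℝ≥0∞)) := rfl
    rw [hwd, integral_withDensity_eq_integral_smul
      ((measurable_gaussianPDFReal 0 v).real_toNNReal)]
    set g : ℝ → ℝ := fun z => p z * (φ (z + μ) * deriv φ (z + μ)) with hg
    have hsmul : (fun x => (p x).toNNReal • (φ (x + μ) * deriv φ (x + μ))) = g := by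
      funext x
      simp [hg, NNReal.smul_def, Real.coe_toNNReal _ (hpnonneg x)]
    rw [hsmul]
    -- pointwise inequality for the symmetrized integrand
    have hple : ∀ x : ℝ, -μ ≤ x → p (-(2*μ) - x) ≤ p x := by
      intro x hx
      simp only [hp, gaussianPDFReal, sub_zero]
      apply mul_le_mul_of_nonneg_left _ (inv_nonneg.mpr (Real.sqrt_nonneg _))
      apply Real.exp_le_exp.mpr
      rw [div_le_div_iff_of_pos_right (by positivity)]
      nlinarith
    have hpt : ∀ x : ℝ, -μ ≤ x → 0 ≤ g x + g (-(2*μ) - x) := by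
      intro x hx
      have e1 : -(2*μ) - x + μ = -(x + μ) := by ring
      have e2 : g (-(2*μ) - x) = -(p (-(2*μ) - x) * (φ (x + μ) * deriv φ (x + μ))) := by
        simp only [hg, e1, hodd (x + μ), hderiv_even (x + μ)]
        ring
      have hA : 0 ≤ φ (x + μ) * deriv φ (x + μ) :=
        mul_nonneg (hφnonneg (x + μ) (by linarith)) (hderiv_nonneg (x + μ))
      have := mul_le_mul_of_nonneg_right (hple x hx) hA
      simp only [hg] at *
      rw [e2]
      linarith
    have hpt' : ∀ x : ℝ, 0 ≤ g x + g (-(2*μ) - x) := by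
      intro x
      rcases le_total (-μ) x with h | h
      · exact hpt x h
      · have h2 := hpt (-(2*μ) - x) (by linarith)
        have e : -(2*μ) - (-(2*μ) - x) = x := by ring
        rw [e] at h2
        linarith
    by_cases hint : Integrable g volume
    · have hint2 : Integrable (fun x => g (-(2*μ) - x)) volume := by
        simpa [sub_eq_add_neg] using hint.comp_sub_left (-(2*μ))
      have hrefl : ∫ x, g (-(2*μ) - x) = ∫ x, g x :=
        integral_sub_left_eq_self g volume (-(2*μ))
      have hsum : 0 ≤ ∫ x, (g x + g (-(2*μ) - x)) :=
        integral_nonneg hpt'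
      rw [integral_add hint hint2, hrefl] at hsum
      linarith
    · rw [integral_undef hint]
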